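/- If I is a monomial ideal in k[x_1, ..., x_d] and M = (x_1, ..., x_d), then the product MI is again a monomial ideal, and the integral closure of a monomial ideal is a monomial ideal. -/

import Mathlib

set_option synthInstance.maxHeartbeats 1000000
set_option maxHeartbeats 1000000

/-- The set of elements of `R` integral over the ideal `I`: `x` satisfying
`x ^ n + a 1 * x ^ (n-1) + ⋯ + a n = 0` with `a j ∈ I ^ j`. -/
def Ideal.intCl {R : Type*} [CommRing R] (I : Ideal R) : Set R :=
  {x | ∃ n : ℕ, 0 < n ∧ ∃ a : ℕ → R,
    (∀ j ∈ Finset.Icc 1 n, a j ∈ I ^ j) ∧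
    x ^ n + ∑ j ∈ Finset.Icc 1 n, a j * x ^ (n - j) = 0}

/-- Minimal number of generators of an ideal. -/
noncomputable def Ideal.mu {R : Type*} [CommRing R] (I : Ideal R) : ℕ :=
  sInf {n : ℕ | ∃ s : Finset R, s.card = n ∧ Ideal.span (s : Set R) = I}

/-- The `M`-adic order of an ideal `I`. -/
noncomputable def Ideal.ord {R : Type*} [CommRing R] (M I : Ideal R) : ℕ :=
  sSup {n : ℕ | I ≤ M ^ n}

/-- An ideal of `k[x₁,…,x_d]` generated by monomials. -/
def IsMonomialIdeal {k : Type*} [Field k] {d : ℕ} (I : Ideal (MvPolynomial (Fin d) k)) : Prop :=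
  ∃ S : Set (Fin d →₀ ℕ), I = Ideal.span ((fun a => MvPolynomial.monomial a (1 : k)) '' S)

open Polynomial in
lemma CmulXpow_mem_rees {R : Type*} [CommRing R] (I : Ideal R) {r : R} {j : ℕ}
    (h : r ∈ I ^ j) : (C r * X ^ j : R[X]) ∈ reesAlgebra I := by
  rw [mem_reesAlgebra_iff]
  intro i
  rw [coeff_C_mul, coeff_X_pow]
  by_cases hij : i = j
  · subst hij; simpa using h
  · simp [hij]

open Polynomial in
lemma intCl_of_rees {R : Type*} [CommRing R] [Nontrivial R] (I : Ideal R) (x : R)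
    (hmem : (C x * X : R[X]) ∈ integralClosure (reesAlgebra I) R[X]) : x ∈ I.intCl := by
  obtain ⟨q, hq, heval⟩ := hmem
  set n := q.natDegree with hndef
  have hn : 0 < n := by
    rcases Nat.eq_zero_or_pos n with h0 | h
    · exfalso
      rw [hq.natDegree_eq_zero] at h0
      rw [h0] at heval
      simp only [Polynomial.eval₂_one] at heval
      exact one_ne_zero heval
    · exact h
  have h0 : ∑ i ∈ Finset.range (n + 1),
      ((q.coeff i : R[X]) * (C x * X) ^ i) = 0 := by
    rw [← heval, Polynomial.eval₂_eq_sum_range]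
    rfl
  have h1 : ∑ i ∈ Finset.range (n + 1),
      (((q.coeff i : R[X]) * (C x * X) ^ i).coeff n) = 0 := by
    rw [← Polynomial.finset_sum_coeff, h0, Polynomial.coeff_zero]
  have hterm : ∀ i ∈ Finset.range (n + 1),
      (((q.coeff i : R[X]) * (C x * X) ^ i).coeff n)
        = ((q.coeff i : R[X])).coeff (n - i) * x ^ i := by
    intro i hi
    have hin : i ≤ n := Nat.lt_succ_iff.mp (Finset.mem_range.mp hi)
    rw [mul_pow, ← C_pow,
      show ((q.coeff i : R[X]) * (C (x ^ i) * X ^ i)) = ((q.coeff i : R[X]) * C (x ^ i)) * X ^ i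
        from by ring,
      Polynomial.coeff_mul_X_pow', if_pos hin, Polynomial.coeff_mul_C]
  rw [Finset.sum_congr rfl hterm, Finset.sum_range_succ] at h1
  have hlead : ((q.coeff n : R[X])).coeff (n - n) * x ^ n = x ^ n := by
    rw [hndef, hq.coeff_natDegree]
    simp
  rw [hlead] at h1
  refine ⟨n, hn, fun j => ((q.coeff (n - j) : R[X])).coeff j, ?_, ?_⟩
  · intro j _
    have := (q.coeff (n - j)).2
    rw [mem_reesAlgebra_iff] at this
    exact this j
  · rw [add_comm] at h1
    rw [← h1]
    congr 1
    refine Finset.sum_nbij' (fun j => n - j) (fun i => n - i) ?_ ?_ ?_ ?_ ?_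
    · intro j hj
      obtain ⟨hj1, hj2⟩ := Finset.mem_Icc.mp hj
      exact Finset.mem_range.mpr (Nat.sub_lt hn hj1)
    · intro i hi
      have := Finset.mem_range.mp hi
      exact Finset.mem_Icc.mpr ⟨Nat.le_sub_of_add_le (by omega), Nat.sub_le _ _⟩
    · intro j hj
      obtain ⟨hj1, hj2⟩ := Finset.mem_Icc.mp hj
      omega
    · intro i hi
      have := Finset.mem_range.mp hi
      omega
    · intro j hj
      obtain ⟨hj1, hj2⟩ := Finset.mem_Icc.mp hj
      have h : n - (n - j) = j := by omega
      simp only [h]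

open Polynomial in
lemma intCl_iff_rees {R : Type*} [CommRing R] [Nontrivial R] (I : Ideal R) (x : R) :
    x ∈ I.intCl ↔ (C x * X : R[X]) ∈ integralClosure (reesAlgebra I) R[X] := by
  refine ⟨?_, fun h => intCl_of_rees I x h⟩
  · rintro ⟨n, hn, a, ha, heq⟩
    set b : ℕ → R := fun j => if j ∈ Finset.Icc 1 n then a j else 0 with hb
    have hbmem : ∀ j, b j ∈ I ^ j := by
      intro j
      by_cases hj : j ∈ Finset.Icc 1 n
      · simp only [hb]; rw [if_pos hj]; exact ha j hj
      · simp only [hb]; rw [if_neg hj]; simp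
    have hbeq : x ^ n + ∑ j ∈ Finset.Icc 1 n, b j * x ^ (n - j) = 0 := by
      rw [← heq]
      congr 1
      refine Finset.sum_congr rfl fun j hj => ?_
      simp only [hb]; rw [if_pos hj]
    refine ⟨Polynomial.X ^ n + ∑ j ∈ Finset.Icc 1 n,
      Polynomial.C (⟨C (b j) * X ^ j, CmulXpow_mem_rees I (hbmem j)⟩ : reesAlgebra I)
        * Polynomial.X ^ (n - j), ?_, ?_⟩
    · apply Polynomial.monic_X_pow_add
      refine lt_of_le_of_lt (Polynomial.degree_sum_le _ _) ?_
      rw [Finset.sup_lt_iff (by exact_mod_cast WithBot.bot_lt_coe n)]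
      intro j hj
      refine lt_of_le_of_lt (Polynomial.degree_mul_le _ _) ?_
      have h1 : (Polynomial.C (⟨C (b j) * X ^ j, CmulXpow_mem_rees I (hbmem j)⟩ :
          reesAlgebra I)).degree ≤ 0 := Polynomial.degree_C_le
      have h2 : (Polynomial.X ^ (n - j) : Polynomial (reesAlgebra I)).degree ≤ (n - j : ℕ) :=
        Polynomial.degree_X_pow_le _
      have hj1 : 1 ≤ j := (Finset.mem_Icc.mp hj).1
      have hlt : (n - j : ℕ) < n := Nat.sub_lt hn hj1
      refine lt_of_le_of_lt (add_le_add h1 h2) ?_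
      rw [zero_add]
      exact_mod_cast hlt
    · show (Polynomial.aeval (C x * X : R[X])) _ = 0
      rw [map_add, map_pow, Polynomial.aeval_X, map_sum]
      have hterm : ∀ j ∈ Finset.Icc 1 n,
          (Polynomial.aeval (C x * X : R[X]))
            (Polynomial.C (⟨C (b j) * X ^ j, CmulXpow_mem_rees I (hbmem j)⟩ : reesAlgebra I)
              * Polynomial.X ^ (n - j))
          = C (b j * x ^ (n - j)) * X ^ n := by
        intro j hj
        have hjn : j ≤ n := (Finset.mem_Icc.mp hj).2
        rw [map_mul, map_pow, Polynomial.aeval_X, Polynomial.aeval_C]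
        have halg : (algebraMap (reesAlgebra I) R[X])
            (⟨C (b j) * X ^ j, CmulXpow_mem_rees I (hbmem j)⟩ : reesAlgebra I)
            = C (b j) * X ^ j := rfl
        rw [halg, mul_pow, ← C_pow]
        calc C (b j) * X ^ j * (C (x ^ (n - j)) * X ^ (n - j))
            = C (b j) * C (x ^ (n - j)) * (X ^ j * X ^ (n - j)) := by ring
          _ = C (b j * x ^ (n - j)) * X ^ n := by
              rw [← C_mul, ← pow_add, Nat.add_sub_cancel' hjn]
      rw [Finset.sum_congr rfl hterm, mul_pow, ← C_pow, ← Finset.sum_mul,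
        ← map_sum C, ← add_mul, ← C_add, hbeq, map_zero, zero_mul]


open Polynomial in
/-- The integral closure of an ideal, as an ideal. -/
def intClIdeal {R : Type*} [CommRing R] [Nontrivial R] (I : Ideal R) : Ideal R where
  carrier := I.intCl
  zero_mem' := by
    refine ⟨1, one_pos, 0, by simp, by simp⟩
  add_mem' := by
    intro a b ha hb
    rw [intCl_iff_rees] at ha hb ⊢
    have := add_mem ha hb
    rwa [← add_mul, ← C_add] at this
  smul_mem' := by
    intro c x hx
    have hx' : x ∈ I.intCl := hx
    rw [intCl_iff_rees] at hx'
    show c * x ∈ I.intCl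
    rw [intCl_iff_rees]
    rw [C_mul, mul_assoc]
    have hc : (C c : R[X]) ∈ integralClosure (reesAlgebra I) R[X] := by
      have : (C c : R[X]) ∈ reesAlgebra I := by
        rw [mem_reesAlgebra_iff]
        intro i
        rcases Nat.eq_zero_or_pos i with h | h
        · subst h; simp
        · rw [coeff_C, if_neg (by omega)]; simp
      exact Subalgebra.algebraMap_mem _ (⟨_, this⟩ : reesAlgebra I)
    exact mul_mem hc hx'

lemma mem_intClIdeal {R : Type*} [CommRing R] [Nontrivial R] (I : Ideal R) (x : R) :
    x ∈ intClIdeal I ↔ x ∈ I.intCl := Iff.rfl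

open MvPolynomial

section Monomial

variable {k : Type*} [Field k] {d : ℕ}

/-- Ideal generated by monomials with exponents in `T`. -/
noncomputable def MonSpan (k : Type*) [Field k] {d : ℕ} (T : Set (Fin d →₀ ℕ)) :
    Ideal (MvPolynomial (Fin d) k) :=
  Ideal.span ((fun a => monomial a (1 : k)) '' T)

lemma mem_monSpan_dominates {T : Set (Fin d →₀ ℕ)} {f : MvPolynomial (Fin d) k}
    (hf : f ∈ MonSpan k T) : ∀ e ∈ f.support, ∃ u ∈ T, u ≤ e := by
  refine Submodule.span_induction ?_ ?_ ?_ ?_ hf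
  · rintro x ⟨u, hu, rfl⟩ e he
    classical
    rw [support_monomial, if_neg (one_ne_zero)] at he
    rw [Finset.mem_singleton] at he
    exact ⟨u, hu, he ▸ le_refl u⟩
  · intro e he
    simp at he
  · intro x y _ _ hx hy e he
    rcases Finset.mem_union.mp (support_add he) with h | h
    · exact hx e h
    · exact hy e h
  · intro a x _ hx e he
    rw [smul_eq_mul] at he
    have := support_mul a x he
    rw [Finset.mem_add] at this
    obtain ⟨p, hp, q, hq, rfl⟩ := this
    obtain ⟨u, hu, huq⟩ := hx q hq
    exact ⟨u, hu, le_trans huq le_add_self⟩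

lemma monomial_mem_monSpan {T : Set (Fin d →₀ ℕ)} {u e : Fin d →₀ ℕ}
    (hu : u ∈ T) (hue : u ≤ e) (c : k) : monomial e c ∈ MonSpan k T := by
  have : monomial e c = monomial (e - u) c * monomial u 1 := by
    rw [monomial_mul, tsub_add_cancel_of_le hue, mul_one]
  rw [this]
  exact Ideal.mul_mem_left _ _ (Ideal.subset_span ⟨u, hu, rfl⟩)

lemma monSpan_mul (A B : Set (Fin d →₀ ℕ)) :
    MonSpan k A * MonSpan k B = MonSpan k (Set.image2 (· + ·) A B) := by
  unfold MonSpan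
  rw [Ideal.span_mul_span']
  congr 1
  ext f
  constructor
  · rintro ⟨x, ⟨u, hu, rfl⟩, y, ⟨v, hv, rfl⟩, rfl⟩
    exact ⟨u + v, ⟨u, hu, v, hv, rfl⟩, by simp [monomial_mul]⟩
  · rintro ⟨w, ⟨u, hu, v, hv, rfl⟩, rfl⟩
    exact ⟨monomial u 1, ⟨u, hu, rfl⟩, monomial v 1, ⟨v, hv, rfl⟩,
      by simp [monomial_mul]⟩

/-- `j`-fold sumsets of `S`. -/
def Sums (S : Set (Fin d →₀ ℕ)) : ℕ → Set (Fin d →₀ ℕ)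
  | 0 => {0}
  | j + 1 => Set.image2 (· + ·) (Sums S j) S

lemma monSpan_pow (S : Set (Fin d →₀ ℕ)) (j : ℕ) :
    (MonSpan k S) ^ j = MonSpan k (Sums S j) := by
  induction j with
  | zero =>
      rw [pow_zero]
      symm
      rw [Ideal.one_eq_top, Ideal.eq_top_iff_one]
      have : (1 : MvPolynomial (Fin d) k) = monomial 0 1 := by simp
      rw [this]
      exact Ideal.subset_span ⟨0, rfl, rfl⟩
  | succ j ih =>
      rw [pow_succ, ih, monSpan_mul]
      rfl

end Monomial

section Key

variable {k : Type*} [Field k] {d : ℕ}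

open MvPolynomial

/-- A monomial integral over a monomial ideal admits a power dominating a sumset element. -/
lemma key_forward {S : Set (Fin d →₀ ℕ)} {a : Fin d →₀ ℕ} {c : k} (hc : c ≠ 0)
    (h : monomial a c ∈ (MonSpan k S).intCl) :
    ∃ j : ℕ, 1 ≤ j ∧ ∃ u ∈ Sums S j, u ≤ j • a := by
  obtain ⟨n, hn, b, hb, heq⟩ := h
  have h2 : c ^ n + ∑ j ∈ Finset.Icc 1 n, coeff (j • a) (b j) * c ^ (n - j) = 0 := by
    have hco := congrArg (coeff (n • a)) heq
    rw [coeff_add, coeff_zero, coeff_sum] at hco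
    rw [monomial_pow, coeff_monomial, if_pos rfl] at hco
    rw [← hco]
    congr 1
    refine Finset.sum_congr rfl fun j hj => ?_
    have hjn : j ≤ n := (Finset.mem_Icc.mp hj).2
    rw [monomial_pow]
    have hsplit : n • a = j • a + (n - j) • a := by
      rw [← add_smul, Nat.add_sub_cancel' hjn]
    rw [hsplit, coeff_mul_monomial]
  have hex : ∃ j ∈ Finset.Icc 1 n, coeff (j • a) (b j) ≠ 0 := by
    by_contra hall
    push_neg at hall
    rw [Finset.sum_eq_zero (fun j hj => by rw [hall j hj, zero_mul]), add_zero] at h2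
    exact pow_ne_zero n hc h2
  obtain ⟨j, hj, hne⟩ := hex
  have hbj : b j ∈ MonSpan k (Sums S j) := by
    rw [← monSpan_pow]
    exact hb j hj
  obtain ⟨u, hu, hule⟩ := mem_monSpan_dominates hbj (j • a) (mem_support_iff.mpr hne)
  exact ⟨j, (Finset.mem_Icc.mp hj).1, u, hu, hule⟩

/-- Conversely, domination gives an (easy) integral equation for the monomial. -/
lemma key_backward {S : Set (Fin d →₀ ℕ)} {a : Fin d →₀ ℕ}
    (h : ∃ j : ℕ, 1 ≤ j ∧ ∃ u ∈ Sums S j, u ≤ j • a) :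
    monomial a (1 : k) ∈ (MonSpan k S).intCl := by
  obtain ⟨j, hj1, u, hu, hule⟩ := h
  refine ⟨j, hj1, fun i => if i = j then -(monomial (j • a) (1 : k)) else 0, ?_, ?_⟩
  · intro i hi
    beta_reduce
    by_cases hij : i = j
    · subst hij
      rw [if_pos rfl]
      refine neg_mem ?_
      rw [monSpan_pow]
      exact monomial_mem_monSpan hu hule 1
    · rw [if_neg hij]
      exact zero_mem _
  · rw [Finset.sum_eq_single_of_mem j (Finset.mem_Icc.mpr ⟨hj1, le_refl j⟩)
      (fun i _ hij => by beta_reduce; rw [if_neg hij, zero_mul])]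
    beta_reduce
    rw [if_pos rfl, Nat.sub_self, pow_zero, mul_one, monomial_pow, one_pow, add_neg_cancel]

end Key

/-- Extracting components from a family of power-weighted sums in a submodule. -/
lemma extract_components {K V α : Type*} [Field K] [AddCommGroup V] [Module K V]
    [DecidableEq α] (P : Submodule K V) (μ : α → K) :
    ∀ T : Finset α, ∀ c : α → V, Set.InjOn μ T →
      (∀ m : ℕ, ∑ x ∈ T, μ x ^ m • c x ∈ P) → ∀ a ∈ T, c a ∈ P := by
  intro T
  induction T using Finset.strongInduction with
  | _ T ih =>
    intro c hinj hm a ha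
    have herase : ∀ x ∈ T.erase a, c x ∈ P := by
      have h2 : ∀ m : ℕ, ∑ x ∈ T.erase a, μ x ^ m • ((μ x - μ a) • c x) ∈ P := by
        intro m
        have hP : (∑ x ∈ T, μ x ^ (m + 1) • c x) - μ a • ∑ x ∈ T, μ x ^ m • c x ∈ P :=
          P.sub_mem (hm (m + 1)) (P.smul_mem (μ a) (hm m))
        have hcalc : (∑ x ∈ T, μ x ^ (m + 1) • c x) - μ a • ∑ x ∈ T, μ x ^ m • c x
            = ∑ x ∈ T, μ x ^ m • ((μ x - μ a) • c x) := by
          rw [Finset.smul_sum, ← Finset.sum_sub_distrib]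
          refine Finset.sum_congr rfl fun x _ => ?_
          rw [smul_smul, smul_smul, ← sub_smul]
          congr 1
          ring
        rw [hcalc] at hP
        rwa [← Finset.sum_erase T (by rw [sub_self, zero_smul, smul_zero])] at hP
      intro x hx
      have hres := ih (T.erase a) (Finset.erase_ssubset ha)
        (fun y => (μ y - μ a) • c y)
        (hinj.mono (Finset.coe_subset.mpr (Finset.erase_subset a T))) h2 x hx
      have hne : μ x - μ a ≠ 0 := by
        refine sub_ne_zero.mpr ?_
        intro hxa
        exact (Finset.ne_of_mem_erase hx) (hinj (Finset.mem_of_mem_erase hx) ha hxa)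
      exact (Submodule.smul_mem_iff P hne).mp hres
    have h0 : ∑ x ∈ T, c x ∈ P := by
      have := hm 0
      simpa using this
    have : c a = (∑ x ∈ T, c x) - ∑ x ∈ T.erase a, c x := by
      rw [← Finset.add_sum_erase T c ha, add_sub_cancel_right]
    rw [this]
    exact P.sub_mem h0 (Submodule.sum_mem P herase)

/-- Ring maps transport integral closure memberships. -/
lemma intCl_map {R S : Type*} [CommRing R] [CommRing S] (g : R →+* S)
    {I : Ideal R} {J : Ideal S} (h : ∀ j : ℕ, ∀ y ∈ I ^ j, g y ∈ J ^ j)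
    {x : R} (hx : x ∈ I.intCl) : g x ∈ J.intCl := by
  obtain ⟨n, hn, b, hb, heq⟩ := hx
  refine ⟨n, hn, fun j => g (b j), fun j hj => h j _ (hb j hj), ?_⟩
  have := congrArg g heq
  rw [map_zero, map_add, map_pow, map_sum] at this
  rw [← this]
  congr 1
  refine Finset.sum_congr rfl fun j _ => ?_
  rw [map_mul, map_pow]

section Transfer

variable {k : Type*} [Field k] {d : ℕ}

open MvPolynomial

lemma monSpan_map_mem {K : Type*} [Field K] (φ : k →+* K) {T : Set (Fin d →₀ ℕ)}
    {f : MvPolynomial (Fin d) k} (hf : f ∈ MonSpan k T) :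
    MvPolynomial.map φ f ∈ MonSpan K T := by
  refine Submodule.span_induction ?_ ?_ ?_ ?_ hf
  · rintro x ⟨u, hu, rfl⟩
    rw [map_monomial, map_one]
    exact Ideal.subset_span ⟨u, hu, rfl⟩
  · rw [map_zero]; exact zero_mem _
  · intro x y _ _ hx hy
    rw [map_add]; exact add_mem hx hy
  · intro a x _ hx
    rw [smul_eq_mul, map_mul]
    exact Ideal.mul_mem_left _ _ hx

/-- An algebra endomorphism scaling variables preserves monomial spans. -/
lemma monSpan_subst_mem {K : Type*} [Field K] (t : Fin d → K) {T : Set (Fin d →₀ ℕ)}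
    {f : MvPolynomial (Fin d) K} (hf : f ∈ MonSpan K T) :
    aeval (fun i => C (t i) * X i : Fin d → MvPolynomial (Fin d) K) f ∈ MonSpan K T := by
  refine Submodule.span_induction ?_ ?_ ?_ ?_ hf
  · rintro x ⟨u, hu, rfl⟩
    rw [aeval_monomial]
    refine Ideal.mul_mem_left _ _ ?_
    have : (u.prod fun i e => (C (t i) * X i : MvPolynomial (Fin d) K) ^ e)
        = C (u.prod fun i e => t i ^ e) * monomial u 1 := by
      rw [Finsupp.prod, Finsupp.prod]
      simp_rw [mul_pow, ← C_pow]
      rw [Finset.prod_mul_distrib, ← map_prod]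
      congr 1
      rw [monomial_eq, map_one, one_mul, Finsupp.prod]
    rw [this]
    exact Ideal.mul_mem_left _ _ (Ideal.subset_span ⟨u, hu, rfl⟩)
  · rw [map_zero]; exact zero_mem _
  · intro x y _ _ hx hy
    rw [map_add]; exact add_mem hx hy
  · intro a x _ hx
    rw [smul_eq_mul, map_mul]
    exact Ideal.mul_mem_left _ _ hx

end Transfer

section Scale

variable {k : Type*} [Field k] {d : ℕ}

open MvPolynomial

lemma aeval_scale_monomial {K : Type*} [Field K] (s : Fin d → K) (a : Fin d →₀ ℕ) (c : K) :
    aeval (fun i => C (s i) * X i : Fin d → MvPolynomial (Fin d) K) (monomial a c)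
      = monomial a (c * a.prod fun i e => s i ^ e) := by
  rw [aeval_monomial]
  have h1 : (a.prod fun i e => (C (s i) * X i : MvPolynomial (Fin d) K) ^ e)
      = C (a.prod fun i e => s i ^ e) * monomial a 1 := by
    rw [Finsupp.prod, Finsupp.prod]
    simp_rw [mul_pow, ← C_pow]
    rw [Finset.prod_mul_distrib, ← map_prod]
    congr 1
    rw [monomial_eq, map_one, one_mul, Finsupp.prod]
  rw [h1, algebraMap_eq, ← mul_assoc, ← C_mul, C_mul_monomial, mul_one]

/-- Extraction of monomial components of an element integral over a monomial ideal
(over the field `K`). -/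
lemma components_mem {K : Type*} [Field K] {S : Set (Fin d →₀ ℕ)}
    {f : MvPolynomial (Fin d) K}
    (μ : (Fin d →₀ ℕ) → K) (hμinj : Function.Injective μ)
    (hμ : ∀ a, μ a = a.prod fun i e => (μ (Finsupp.single i 1)) ^ e)
    (hf : f ∈ (MonSpan K S).intCl) :
    ∀ a ∈ f.support, monomial a (coeff a f) ∈ (MonSpan K S).intCl := by
  classical
  intro a ha
  set t : Fin d → K := fun i => μ (Finsupp.single i 1) with ht
  -- the scaled versions of f remain integral
  have hscale : ∀ m : ℕ,
      aeval (fun i => C (t i ^ m) * X i : Fin d → MvPolynomial (Fin d) K) f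
        ∈ (MonSpan K S).intCl := by
    intro m
    obtain ⟨n, hn, b, hb, heq⟩ := hf
    refine ⟨n, hn, fun j => aeval (fun i => C (t i ^ m) * X i : Fin d → MvPolynomial (Fin d) K)
      (b j), fun j hj => ?_, ?_⟩
    · have hbj := hb j hj
      rw [monSpan_pow] at hbj ⊢
      exact monSpan_subst_mem _ hbj
    · have := congrArg (aeval (fun i => C (t i ^ m) * X i : Fin d → MvPolynomial (Fin d) K)) heq
      rw [map_zero, map_add, map_pow, map_sum] at this
      rw [← this]
      congr 1
      refine Finset.sum_congr rfl fun j _ => ?_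
      rw [map_mul, map_pow]
  -- rewrite the scaled version as a μ-power weighted sum
  have hsum : ∀ m : ℕ,
      aeval (fun i => C (t i ^ m) * X i : Fin d → MvPolynomial (Fin d) K) f
        = ∑ x ∈ f.support, μ x ^ m • monomial x (coeff x f) := by
    intro m
    conv_lhs => rw [← support_sum_monomial_coeff f]
    rw [map_sum]
    refine Finset.sum_congr rfl fun x _ => ?_
    rw [aeval_scale_monomial]
    have hprod : (x.prod fun i e => (t i ^ m) ^ e) = μ x ^ m := by
      rw [hμ x, Finsupp.prod, Finsupp.prod, ← Finset.prod_pow]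
      refine Finset.prod_congr rfl fun i _ => ?_
      rw [← pow_mul, ← pow_mul, mul_comm]
    rw [hprod, smul_monomial, smul_eq_mul, mul_comm]
  -- apply the extraction lemma
  have hP := extract_components
    (Submodule.restrictScalars K (intClIdeal (MonSpan K S) : Ideal (MvPolynomial (Fin d) K)))
    μ f.support (fun x => monomial x (coeff x f)) (hμinj.injOn)
    (fun m => by
      rw [Submodule.restrictScalars_mem, ← hsum m]
      exact hscale m) a ha
  exact hP

end Scale

open MvPolynomial

/-- If `I` is a monomial ideal then `M I` is a monomial ideal, and the integral
closure of `I` is a monomial ideal. -/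
theorem monomial_ideal_stable (k : Type*) [Field k] (d : ℕ)
    (I : Ideal (MvPolynomial (Fin d) k)) (hI : IsMonomialIdeal I)
    (M : Ideal (MvPolynomial (Fin d) k))
    (hM : M = Ideal.span (Set.range (MvPolynomial.X : Fin d → MvPolynomial (Fin d) k))) :
    IsMonomialIdeal (M * I) ∧
      ∃ J : Ideal (MvPolynomial (Fin d) k),
        (J : Set (MvPolynomial (Fin d) k)) = I.intCl ∧ IsMonomialIdeal J := by
  obtain ⟨S, hS⟩ := hI
  have hS' : I = MonSpan k S := hS
  have hr : Ideal.span (Set.range (X : Fin d → MvPolynomial (Fin d) k))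
      = MonSpan k (Set.range fun i : Fin d => Finsupp.single i 1) := by
    unfold MonSpan
    congr 1
    rw [← Set.range_comp]
    rfl
  constructor
  · refine ⟨Set.image2 (· + ·) (Set.range fun i : Fin d => Finsupp.single i 1) S, ?_⟩
    rw [hM, hS', hr, monSpan_mul]
    rfl
  · set T : Set (Fin d →₀ ℕ) := {a | monomial a (1 : k) ∈ I.intCl} with hT
    refine ⟨MonSpan k T, ?_, ⟨T, rfl⟩⟩
    apply Set.Subset.antisymm
    · intro x hx
      have hJle : MonSpan k T ≤ intClIdeal I :=
        Ideal.span_le.mpr (by rintro _ ⟨a, ha, rfl⟩; exact ha)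
      exact hJle hx
    · intro f hf
      show f ∈ MonSpan k T
      -- set up the field extension
      set K := FractionRing (MvPolynomial (Fin d) k) with hK
      set φ : k →+* K := (algebraMap (MvPolynomial (Fin d) k) K).comp
        (C : k →+* MvPolynomial (Fin d) k) with hφ
      have hfI : f ∈ (MonSpan k S).intCl := by rw [← hS']; exact hf
      have hfK : MvPolynomial.map φ f ∈ (MonSpan K S).intCl := by
        refine intCl_map (MvPolynomial.map φ) ?_ hfI
        intro j y hy
        rw [monSpan_pow] at hy ⊢
        exact monSpan_map_mem φ hy
      set μ : (Fin d →₀ ℕ) → K :=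
        fun a => algebraMap (MvPolynomial (Fin d) k) K (monomial a (1 : k)) with hμdef
      have hμinj : Function.Injective μ := by
        intro x y h
        have h2 := IsFractionRing.injective (MvPolynomial (Fin d) k) K h
        exact monomial_left_injective (one_ne_zero (α := k)) h2
      have hμ : ∀ a, μ a = a.prod fun i e => (μ (Finsupp.single i 1)) ^ e := by
        intro a
        have hx : ∀ i : Fin d, μ (Finsupp.single i 1)
            = algebraMap (MvPolynomial (Fin d) k) K (X i) := fun i => rfl
        have hmono : (monomial a (1 : k)) = a.prod fun i e => (X i) ^ e := by
          rw [monomial_eq, map_one, one_mul]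
        rw [hμdef]
        simp only
        rw [hmono, map_finsuppProd]
        refine Finsupp.prod_congr fun i hi => ?_
        rw [map_pow]
        congr 2
      -- each monomial of f is integral
      have haT : ∀ a ∈ f.support, a ∈ T := by
        intro a ha
        have hasupp : a ∈ (MvPolynomial.map φ f).support := by
          rw [mem_support_iff, coeff_map]
          exact fun h => (mem_support_iff.mp ha) (RingHom.injective φ (by rw [h, map_zero]))
        have hcomp := components_mem μ hμinj hμ hfK a hasupp
        have hc0 : coeff a (MvPolynomial.map φ f) ≠ 0 := mem_support_iff.mp hasupp
        have hkey := key_forward hc0 hcomp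
        show monomial a (1 : k) ∈ I.intCl
        rw [hS']
        exact key_backward hkey
      have hrw : f = ∑ a ∈ f.support, monomial a (coeff a f) :=
        (support_sum_monomial_coeff f).symm
      rw [hrw]
      refine Submodule.sum_mem _ fun a ha => ?_
      have : monomial a (coeff a f) = C (coeff a f) * monomial a 1 := by
        rw [C_mul_monomial, mul_one]
      rw [this]
      exact Ideal.mul_mem_left _ _ (Ideal.subset_span ⟨a, haT a ha, rfl⟩)
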